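/- Let N be an irreducible D_t-module with s | t. Then the induced D_s-module N↑^s_t = D_s ⊗_{D_t} N is semisimple. Specifically, every D_s-submodule Q of N↑^s_t is a direct summand: averaging a D_t-linear projection α onto Q over the cosets via ñ ↦ (s/t) Σ_{i=0}^{t/s - 1} (Φ^{-is} ∘ α ∘ Φ^{is})(ñ) yields a D_s-linear projection onto Q. -/

import Mathlib

namespace IndSSAux

variable {F V W : Type*} [Field F] [AddCommGroup V] [Module F V]

lemma iter_add (A : V ≃+ V) (n : ℕ) (x y : V) :
    (⇑A)^[n] (x + y) = (⇑A)^[n] x + (⇑A)^[n] y := by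
  induction n generalizing x y with
  | zero => simp
  | succ n ih =>
    rw [Function.iterate_succ_apply, Function.iterate_succ_apply,
      Function.iterate_succ_apply, map_add, ih]

lemma iter_zero (A : V ≃+ V) (n : ℕ) : (⇑A)^[n] (0 : V) = 0 :=
  Function.iterate_fixed (map_zero A) n

lemma iter_smul (A : V ≃+ V) (σ : F → F)
    (hA : ∀ (f : F) (v : V), A (f • v) = σ f • A v) (n : ℕ) (f : F) (v : V) :
    (⇑A)^[n] (f • v) = σ^[n] f • (⇑A)^[n] v := by
  induction n generalizing f v with
  | zero => simp
  | succ n ih =>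
    rw [Function.iterate_succ_apply, Function.iterate_succ_apply,
      Function.iterate_succ_apply, hA, ih]

lemma stab_iter (g : V → V) (Q : Submodule F V) (h : ∀ x ∈ Q, g x ∈ Q)
    (n : ℕ) : ∀ x ∈ Q, g^[n] x ∈ Q := by
  induction n with
  | zero => intro x hx; simpa using hx
  | succ n ih =>
    intro x hx
    rw [Function.iterate_succ_apply]
    exact ih _ (h x hx)

/-- The image of a submodule under a semilinear additive bijection. -/
def imSub (A : V ≃+ V) (σ' : F → F)
    (h : ∀ (f : F) (v : V), f • A v = A (σ' f • v)) (Q : Submodule F V) :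
    Submodule F V where
  carrier := ⇑A '' Q
  add_mem' := by
    rintro a b ⟨x, hx, rfl⟩ ⟨y, hy, rfl⟩
    exact ⟨x + y, Q.add_mem hx hy, map_add A x y⟩
  zero_mem' := ⟨0, Q.zero_mem, map_zero A⟩
  smul_mem' := by
    rintro f a ⟨x, hx, rfl⟩
    exact ⟨σ' f • x, Q.smul_mem _ hx, (h f x).symm⟩

lemma coe_imSub (A : V ≃+ V) (σ' : F → F)
    (h : ∀ (f : F) (v : V), f • A v = A (σ' f • v)) (Q : Submodule F V) :
    (imSub A σ' h Q : Set V) = ⇑A '' Q := rfl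

lemma symm_mem_of_stab [FiniteDimensional F V] (A : V ≃+ V) (σ' : F → F)
    (h : ∀ (f : F) (v : V), f • A v = A (σ' f • v)) (Q : Submodule F V)
    (hst : ∀ x ∈ Q, A x ∈ Q) : ∀ x ∈ Q, A.symm x ∈ Q := by
  suffices him : imSub A σ' h Q = Q by
    intro x hx
    rw [← him] at hx
    obtain ⟨y, hy, hxy⟩ := hx
    rwa [← hxy, A.symm_apply_apply]
  by_contra hne
  -- strict monotonicity of `imSub`
  have key : ∀ P R : Submodule F V, P < R → imSub A σ' h P < imSub A σ' h R := by
    intro P R hPR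
    refine lt_of_le_of_ne ?_ ?_
    · rintro x ⟨y, hy, rfl⟩
      exact ⟨y, hPR.le hy, rfl⟩
    · intro heq
      apply hPR.ne
      apply SetLike.coe_injective
      have hsets : (⇑A '' P : Set V) = ⇑A '' R := by
        rw [← coe_imSub A σ' h P, ← coe_imSub A σ' h R, heq]
      exact (Set.image_injective.mpr A.injective) hsets
  -- stability propagates
  have hstab : ∀ P : Submodule F V, (∀ x ∈ P, A x ∈ P) →
      (∀ x ∈ imSub A σ' h P, A x ∈ imSub A σ' h P) := by
    rintro P hP x ⟨y, hy, rfl⟩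
    exact ⟨A y, hP y hy, rfl⟩
  have hle : ∀ P : Submodule F V, (∀ x ∈ P, A x ∈ P) → imSub A σ' h P ≤ P := by
    rintro P hP x ⟨y, hy, rfl⟩
    exact hP y hy
  have hchainst : ∀ m : ℕ, ∀ x ∈ (imSub A σ' h)^[m] Q, A x ∈ (imSub A σ' h)^[m] Q := by
    intro m
    induction m with
    | zero => exact hst
    | succ m ih =>
      rw [Function.iterate_succ_apply']
      exact hstab _ ih
  have hlt0 : imSub A σ' h Q < Q := lt_of_le_of_ne (hle Q hst) hne
  have hchain : ∀ m : ℕ, (imSub A σ' h)^[m + 1] Q < (imSub A σ' h)^[m] Q := by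
    intro m
    induction m with
    | zero => simpa using hlt0
    | succ m ih =>
      have := key _ _ ih
      rwa [← Function.iterate_succ_apply' (imSub A σ' h) (m + 1) Q,
        ← Function.iterate_succ_apply' (imSub A σ' h) m Q] at this
  have hdesc : ∀ m : ℕ,
      Module.finrank F ((imSub A σ' h)^[m] Q) + m ≤ Module.finrank F Q := by
    intro m
    induction m with
    | zero => exact le_rfl
    | succ m ih =>
      have h1 := Submodule.finrank_lt_finrank_of_lt (hchain m)
      omega
  have := hdesc (Module.finrank F Q + 1)
  omega

lemma exists_compl_stab [FiniteDimensional F V] {ι : Type*} (B : V → V)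
    (hB0 : B 0 = 0) (hBadd : ∀ x y, B (x + y) = B x + B y)
    (M : ι → Submodule F V) (hMst : ∀ i, ∀ x ∈ M i, B x ∈ M i)
    (hMirr : ∀ i, ∀ p : Submodule F V, p ≤ M i → (∀ x ∈ p, B x ∈ p) → p = ⊥ ∨ p = M i)
    (hMsup : (⨆ i, M i) = ⊤)
    (Q : Submodule F V) (hQ : ∀ x ∈ Q, B x ∈ Q) :
    ∃ P : Submodule F V, (∀ x ∈ P, B x ∈ P) ∧ IsCompl Q P := by
  obtain ⟨P, ⟨hPst, hPdis⟩, hPmax⟩ :=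
    (set_has_maximal_iff_noetherian.mpr inferInstance)
      {P : Submodule F V | (∀ x ∈ P, B x ∈ P) ∧ Disjoint Q P}
      ⟨⊥, fun x hx => by
          rw [Submodule.mem_bot] at hx ⊢
          rw [hx, hB0], disjoint_bot_right⟩
  refine ⟨P, hPst, hPdis, ?_⟩
  rw [codisjoint_iff_le_sup, ← hMsup]
  refine iSup_le fun i => ?_
  have hstab : ∀ x ∈ M i ⊓ (Q ⊔ P), B x ∈ M i ⊓ (Q ⊔ P) := by
    intro x hx
    rw [Submodule.mem_inf] at hx ⊢
    refine ⟨hMst i x hx.1, ?_⟩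
    obtain ⟨a, ha, b, hb, rfl⟩ := Submodule.mem_sup.mp hx.2
    rw [hBadd]
    exact Submodule.add_mem_sup (hQ a ha) (hPst b hb)
  rcases hMirr i (M i ⊓ (Q ⊔ P)) inf_le_left hstab with hbot | htop
  · -- then `P ⊔ M i` is still in the family, so `M i ≤ P` by maximality
    have hmem : P ⊔ M i ∈ {P : Submodule F V | (∀ x ∈ P, B x ∈ P) ∧ Disjoint Q P} := by
      constructor
      · intro x hx
        obtain ⟨a, ha, b, hb, rfl⟩ := Submodule.mem_sup.mp hx
        rw [hBadd]
        exact Submodule.add_mem_sup (hPst a ha) (hMst i b hb)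
      · rw [Submodule.disjoint_def]
        intro x hxQ hxPM
        obtain ⟨a, ha, b, hb, hab⟩ := Submodule.mem_sup.mp hxPM
        have hbmem : b ∈ M i ⊓ (Q ⊔ P) := by
          rw [Submodule.mem_inf]
          refine ⟨hb, ?_⟩
          have : b = x - a := by rw [← hab]; abel
          rw [this]
          exact Submodule.sub_mem _ (Submodule.mem_sup_left hxQ)
            (Submodule.mem_sup_right ha)
        rw [hbot, Submodule.mem_bot] at hbmem
        rw [hbmem, add_zero] at hab
        exact Submodule.disjoint_def.mp hPdis x hxQ (hab ▸ ha)
    have hPM : ¬ P < P ⊔ M i := hPmax _ hmem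
    have : P ⊔ M i = P := by
      rcases lt_or_eq_of_le (le_sup_left : P ≤ P ⊔ M i) with h | h
      · exact absurd h hPM
      · exact h.symm
    exact le_trans (sup_eq_left.mp this) le_sup_right
  · exact inf_eq_left.mp htop

/-- A twisted range submodule. -/
def twRange [AddCommGroup W] [Module F W] (g : W → V)
    (h0 : g 0 = 0) (hadd : ∀ x y, g (x + y) = g x + g y)
    (hs : ∀ (f : F) (w : W), ∃ w', g w' = f • g w) : Submodule F V where
  carrier := Set.range g
  add_mem' := by rintro _ _ ⟨x, rfl⟩ ⟨y, rfl⟩; exact ⟨x + y, hadd x y⟩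
  zero_mem' := ⟨0, h0⟩
  smul_mem' := by
    rintro f _ ⟨x, rfl⟩
    obtain ⟨w', hw'⟩ := hs f x
    exact ⟨w', hw'⟩

lemma mem_twRange [AddCommGroup W] [Module F W] (g : W → V)
    (h0 : g 0 = 0) (hadd : ∀ x y, g (x + y) = g x + g y)
    (hs : ∀ (f : F) (w : W), ∃ w', g w' = f • g w) (x : V) :
    x ∈ twRange g h0 hadd hs ↔ ∃ w, g w = x := Iff.rfl

end IndSSAux

open IndSSAux

/-- A subspace `p` is stable under the (semilinear) action `g`. -/
def DiffStab {F V : Type*} [Field F] [AddCommGroup V] [Module F V]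
    (g : V → V) (p : Submodule F V) : Prop :=
  ∀ x ∈ p, g x ∈ p

/-- `(V, A)` realizes the induced module `D_s ⊗_{D_t} (W, Ψ)` with `k = t/s`. -/
def IsInducedTw {F W V : Type*} [Field F] [AddCommGroup W] [Module F W]
    [AddCommGroup V] [Module F V]
    (τ : F → F) (A : V → V) (k : ℕ) (Ψ : W → W) : Prop :=
  ∃ j : W →+ V,
    (∀ (f : F) (w : W), j (f • w) = τ f • j w) ∧
    (∀ w : W, A^[k] (j w) = j (Ψ w)) ∧
    (∀ v : V, ∃! c : Fin k → W, v = ∑ i : Fin k, A^[(i : ℕ)] (j (c i)))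

/-- Induction of an irreducible module is semisimple (char 0): let `s ∣ t`, let
`N = (W, Ψ)` be an irreducible finite-dimensional `D_t`-module and let `(V, A)` be
the induced `D_s`-module `N↑^s_t = D_s ⊗_{D_t} N`.  Then every `D_s`-submodule `Q`
of `N↑^s_t` is a direct summand: it has a `D_s`-stable complement (obtained by
averaging a `D_t`-linear projection onto `Q` over the cosets). -/
theorem induced_of_irreducible_semisimple {F W V : Type*} [Field F] [CharZero F]
    [AddCommGroup W] [Module F W] [FiniteDimensional F W]
    [AddCommGroup V] [Module F V] [FiniteDimensional F V]
    (φ : F ≃+* F) (s t : ℕ) (hs : 0 < s) (hst : s ∣ t)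
    (Ψ : W ≃+ W) (hΨ : ∀ (f : F) (w : W), Ψ (f • w) = (⇑φ)^[t] f • Ψ w)
    (hntW : Nontrivial W)
    (hirr : ∀ p : Submodule F W, DiffStab ⇑Ψ p → p = ⊥ ∨ p = ⊤)
    (A : V ≃+ V) (hA : ∀ (f : F) (v : V), A (f • v) = (⇑φ)^[s] f • A v)
    (hInd : IsInducedTw (id : F → F) ⇑A (t / s) ⇑Ψ) :
    ∀ Q : Submodule F V, DiffStab ⇑A Q →
      ∃ R : Submodule F V, DiffStab ⇑A R ∧ IsCompl Q R := by
  intro Q hQ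
  obtain ⟨j, hj, hjΨ, hrep⟩ := hInd
  set k := t / s with hkdef
  by_cases hk0 : k = 0
  · -- degenerate case : `V` is trivial
    have hV : ∀ v : V, v = 0 := by
      intro v
      obtain ⟨c, hc, -⟩ := hrep v
      haveI : IsEmpty (Fin k) := by rw [hk0]; infer_instance
      rw [Finset.univ_eq_empty, Finset.sum_empty] at hc
      exact hc
    have hQbot : Q = ⊥ := by
      ext x
      simp [hV x]
    refine ⟨⊤, fun x _ => Submodule.mem_top, ?_⟩
    rw [hQbot]
    exact isCompl_bot_top
  -- main case
  have hkpos : 0 < k := Nat.pos_of_ne_zero hk0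
  set σ : F → F := (⇑φ)^[s] with hσdef
  set σ' : F → F := (⇑φ.symm)^[s] with hσ'def
  have hσσ' : ∀ f, σ (σ' f) = f :=
    Function.LeftInverse.iterate (fun x => φ.apply_symm_apply x) s
  have hσ'σ : ∀ f, σ' (σ f) = f :=
    Function.LeftInverse.iterate (fun x => φ.symm_apply_apply x) s
  have hAs : ∀ (f : F) (v : V), A.symm (f • v) = σ' f • A.symm v := by
    intro f v
    have h1 : A (σ' f • A.symm v) = f • v := by
      rw [hA, hσσ', A.apply_symm_apply]
    rw [← h1, A.symm_apply_apply]
  have hAn := iter_smul A σ hA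
  have hAsn := iter_smul A.symm σ' hAs
  have hQB : ∀ x ∈ Q, (⇑A)^[k] x ∈ Q := stab_iter ⇑A Q hQ k
  have hQs : ∀ x ∈ Q, A.symm x ∈ Q :=
    symm_mem_of_stab A σ' (fun f v => by rw [hA, hσσ']) Q hQ
  have hQsn : ∀ n, ∀ x ∈ Q, (⇑A.symm)^[n] x ∈ Q := stab_iter ⇑A.symm Q hQs
  -- the coset pieces `M i = Φ^i ⊗ N`
  set g : ℕ → W → V := fun i w => (⇑A)^[i] (j w) with hgdef
  have hgadd : ∀ i x y, g i (x + y) = g i x + g i y := by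
    intro i x y
    simp only [hgdef, map_add, iter_add]
  have hg0 : ∀ i, g i 0 = 0 := by
    intro i
    simp only [hgdef, map_zero, iter_zero]
  have hgsmul : ∀ (i : ℕ) (f : F) (w : W), g i (f • w) = σ^[i] f • g i w := by
    intro i f w
    simp only [hgdef, hj, id, hAn]
  have hgs : ∀ (i : ℕ) (f : F) (w : W), ∃ w', g i w' = f • g i w := by
    intro i f w
    refine ⟨σ'^[i] f • w, ?_⟩
    rw [hgsmul, Function.LeftInverse.iterate hσσ' i]
  have hgΨ : ∀ (i : ℕ) (w : W), (⇑A)^[k] (g i w) = g i (Ψ w) := by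
    intro i w
    simp only [hgdef]
    rw [← Function.iterate_add_apply, Nat.add_comm, Function.iterate_add_apply, hjΨ]
  let M : Fin k → Submodule F V := fun i =>
    twRange (g i) (hg0 i) (hgadd i) (hgs i)
  have hMmem : ∀ (i : Fin k) (x : V), x ∈ M i ↔ ∃ w, g i w = x := fun i x => Iff.rfl
  have hMst : ∀ (i : Fin k), ∀ x ∈ M i, (⇑A)^[k] x ∈ M i := by
    intro i x hx
    obtain ⟨w, rfl⟩ := (hMmem i x).mp hx
    rw [hgΨ]
    exact (hMmem i _).mpr ⟨Ψ w, rfl⟩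
  have hMirr : ∀ (i : Fin k), ∀ p : Submodule F V, p ≤ M i →
      (∀ x ∈ p, (⇑A)^[k] x ∈ p) → p = ⊥ ∨ p = M i := by
    intro i p hple hpst
    obtain ⟨q, hq⟩ : ∃ q : Submodule F W, ∀ w, w ∈ q ↔ g i w ∈ p := by
      refine ⟨{  carrier := {w | g (i : ℕ) w ∈ p}
                 add_mem' := ?_
                 zero_mem' := ?_
                 smul_mem' := ?_ }, fun w => Iff.rfl⟩
      · intro a b ha hb
        simp only [Set.mem_setOf_eq] at ha hb ⊢
        rw [hgadd]
        exact p.add_mem ha hb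
      · simp only [Set.mem_setOf_eq, hg0]
        exact p.zero_mem
      · intro f w hw
        simp only [Set.mem_setOf_eq] at hw ⊢
        rw [hgsmul]
        exact p.smul_mem _ hw
    have hqΨ : DiffStab ⇑Ψ q := by
      intro w hw
      rw [hq] at hw ⊢
      rw [← hgΨ]
      exact hpst _ hw
    rcases hirr q hqΨ with hbot | htop
    · left
      rw [eq_bot_iff]
      intro x hx
      obtain ⟨w, rfl⟩ := (hMmem i x).mp (hple hx)
      have hwq : w ∈ q := (hq w).mpr hx
      rw [hbot, Submodule.mem_bot] at hwq
      rw [hwq, hg0]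
      exact Submodule.zero_mem ⊥
    · right
      refine le_antisymm hple ?_
      intro x hx
      obtain ⟨w, rfl⟩ := (hMmem i x).mp hx
      exact (hq w).mp (htop ▸ Submodule.mem_top)
  have hMsup : (⨆ i, M i) = ⊤ := by
    rw [eq_top_iff]
    intro v _
    obtain ⟨c, hc, -⟩ := hrep v
    rw [hc]
    refine Submodule.sum_mem _ fun i _ => ?_
    exact Submodule.mem_iSup_of_mem i ((hMmem i _).mpr ⟨c i, rfl⟩)
  obtain ⟨P, hPst, hPcompl⟩ :=
    exists_compl_stab ((⇑A)^[k]) (iter_zero A k) (iter_add A k) M hMst hMirr hMsup Q hQB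
  -- the D_t-linear projection π onto Q
  set π : V →ₗ[F] V := Q.subtype.comp (Q.linearProjOfIsCompl P hPcompl) with hπdef
  have hπQ : ∀ v, π v ∈ Q := fun v => (Q.linearProjOfIsCompl P hPcompl v).2
  have hπid : ∀ x ∈ Q, π x = x := by
    intro x hx
    have h1 := Submodule.linearProjOfIsCompl_apply_left hPcompl ⟨x, hx⟩
    have h2 := congrArg (Q.subtype) h1
    exact h2
  have hπP : ∀ x ∈ P, π x = 0 := by
    intro x hx
    have h1 := Submodule.linearProjOfIsCompl_apply_right hPcompl ⟨x, hx⟩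
    have h2 := congrArg (Q.subtype) h1
    exact h2
  have hdecomp : ∀ v : V, ∃ a ∈ Q, ∃ b ∈ P, a + b = v := by
    intro v
    have : v ∈ Q ⊔ P := by rw [hPcompl.sup_eq_top]; exact Submodule.mem_top
    exact Submodule.mem_sup.mp this
  have hπB : ∀ v, π ((⇑A)^[k] v) = (⇑A)^[k] (π v) := by
    intro v
    obtain ⟨a, ha, b, hb, hab⟩ := hdecomp v
    have hπv : π v = a := by
      rw [← hab, map_add, hπid a ha, hπP b hb, add_zero]
    calc π ((⇑A)^[k] v) = (⇑A)^[k] a := by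
          rw [← hab, iter_add, map_add, hπid _ (hQB a ha), hπP _ (hPst b hb), add_zero]
      _ = (⇑A)^[k] (π v) := by rw [hπv]
  -- averaging
  have hTsmul : ∀ (i : ℕ) (f : F) (v : V),
      (⇑A.symm)^[i] (π ((⇑A)^[i] (f • v))) = f • (⇑A.symm)^[i] (π ((⇑A)^[i] v)) := by
    intro i f v
    rw [hAn, map_smul, hAsn, Function.LeftInverse.iterate hσ'σ i]
  let T : ℕ → V →ₗ[F] V := fun i =>
    { toFun := fun v => (⇑A.symm)^[i] (π ((⇑A)^[i] v))
      map_add' := fun x y => by rw [iter_add, map_add, iter_add]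
      map_smul' := fun f v => by simpa using hTsmul i f v }
  let β : V →ₗ[F] V := ∑ i ∈ Finset.range k, T i
  have hβ : ∀ v, β v = ∑ i ∈ Finset.range k, (⇑A.symm)^[i] (π ((⇑A)^[i] v)) := by
    intro v
    simp [β, T, LinearMap.sum_apply]
  have hLI : ∀ (n : ℕ) (y : V), (⇑A.symm)^[n] ((⇑A)^[n] y) = y := fun n =>
    Function.LeftInverse.iterate (fun y => A.symm_apply_apply y) n
  have h1 : ∀ v, β v ∈ Q := by
    intro v
    rw [hβ]
    exact Submodule.sum_mem _ fun i _ => hQsn i _ (hπQ _)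
  have h2 : ∀ x ∈ Q, β x = (k : F) • x := by
    intro x hx
    rw [hβ]
    have hterm : ∀ i ∈ Finset.range k, (⇑A.symm)^[i] (π ((⇑A)^[i] x)) = x := by
      intro i _
      rw [hπid _ (stab_iter ⇑A Q hQ i x hx), hLI i]
    rw [Finset.sum_congr rfl hterm, Finset.sum_const, Finset.card_range]
    exact (Nat.cast_smul_eq_nsmul F k x).symm
  have h3 : ∀ v, β (A v) = A (β v) := by
    intro v
    obtain ⟨k', hk'⟩ : ∃ k', k = k' + 1 := ⟨k - 1, by omega⟩
    have hπB' : π ((⇑A)^[k' + 1] v) = (⇑A)^[k' + 1] (π v) := by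
      rw [← hk']
      exact hπB v
    rw [hβ, hβ, map_sum, hk']
    rw [Finset.sum_range_succ (fun i => (⇑A.symm)^[i] (π ((⇑A)^[i] (A v)))) k']
    rw [Finset.sum_range_succ' (fun i => A ((⇑A.symm)^[i] (π ((⇑A)^[i] v)))) k']
    congr 1
    · refine Finset.sum_congr rfl fun i _ => ?_
      rw [Function.iterate_succ_apply' (⇑A.symm) i, A.apply_symm_apply,
        ← Function.iterate_succ_apply (⇑A) i v]
    · -- last term of LHS equals first term of RHS
      rw [← Function.iterate_succ_apply (⇑A) k' v, hπB',
        Function.iterate_succ_apply (⇑A) k' (π v), hLI k']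
      simp
  set Bl : V →ₗ[F] V := ((k : F)⁻¹) • β with hBldef
  have hkF : (k : F) ≠ 0 := Nat.cast_ne_zero.mpr hk0
  have hσq : σ ((k : F)⁻¹) = (k : F)⁻¹ := by
    have hfix : φ ((k : F)⁻¹) = (k : F)⁻¹ := by rw [map_inv₀, map_natCast]
    exact Function.iterate_fixed hfix s
  have hBlQ : ∀ v, Bl v ∈ Q := by
    intro v
    simp only [hBldef, LinearMap.smul_apply]
    exact Q.smul_mem _ (h1 v)
  have hBlid : ∀ x ∈ Q, Bl x = x := by
    intro x hx
    simp only [hBldef, LinearMap.smul_apply]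
    rw [h2 x hx, smul_smul, inv_mul_cancel₀ hkF, one_smul]
  have hBlA : ∀ v, Bl (A v) = A (Bl v) := by
    intro v
    simp only [hBldef, LinearMap.smul_apply]
    rw [h3, hA, hσq]
  let fQ : V →ₗ[F] Q := LinearMap.codRestrict Q Bl hBlQ
  have hfQ : ∀ x : Q, fQ x = x := by
    intro x
    apply Subtype.ext
    rw [LinearMap.codRestrict_apply]
    exact hBlid x x.2
  refine ⟨LinearMap.ker fQ, ?_, LinearMap.isCompl_of_proj hfQ⟩
  intro x hx
  rw [LinearMap.mem_ker] at hx
  have hx0 : Bl x = 0 := by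
    have := congrArg (Subtype.val) hx
    simpa [fQ, LinearMap.codRestrict_apply] using this
  rw [LinearMap.mem_ker]
  apply Subtype.ext
  rw [LinearMap.codRestrict_apply]
  rw [hBlA, hx0, map_zero]
  rfl
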